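/- Let D ⊂ ℂ^n be a bounded, strongly ℂ-linearly convex C^{1,1} domain with Δ(w,z) = ⟨∂ρ(w), w−z⟩. Then for w₁, w₂, z ∈ bD: |Δ(w₁,z) − Δ(w₂,z)| ≲ d(w₁,w₂)² + d(w₁,w₂)·d(w₁,z), where d(w,z) = |Δ(w,z)|^{1/2}. -/

import Mathlib

/-- The Leray pairing `Δ(w,z) = ⟨∂ρ(w), w−z⟩`. -/
noncomputable def cplxPair {n : ℕ}
    (pc : EuclideanSpace ℂ (Fin n) → EuclideanSpace ℂ (Fin n))
    (w z : EuclideanSpace ℂ (Fin n)) : ℂ :=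
  ∑ j, pc w j * (w j - z j)

/-- The quasi-distance `d(w,z) = |Δ(w,z)|^{1/2}`. -/
noncomputable def lerayDist {n : ℕ}
    (pc : EuclideanSpace ℂ (Fin n) → EuclideanSpace ℂ (Fin n))
    (w z : EuclideanSpace ℂ (Fin n)) : ℝ :=
  Real.sqrt ‖cplxPair pc w z‖

/-- Cauchy–Schwarz for coordinate sums in complex Euclidean space. -/
lemma sum_mul_abs_le_norm_mul_norm {n : ℕ} (a b : EuclideanSpace ℂ (Fin n)) :
    ‖∑ j, a j * b j‖ ≤ ‖a‖ * ‖b‖ := by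
  have h1 : ‖∑ j, a j * b j‖ ≤ ∑ j, ‖a j‖ * ‖b j‖ := by
    refine (norm_sum_le _ _).trans_eq ?_
    exact Finset.sum_congr rfl fun j _ => norm_mul _ _
  refine h1.trans ?_
  have hcs := Finset.sum_mul_sq_le_sq_mul_sq Finset.univ (fun j => ‖a j‖)
    (fun j => ‖b j‖)
  have hna : ‖a‖ ^ 2 = ∑ j, ‖a j‖ ^ 2 := by
    rw [EuclideanSpace.norm_eq, Real.sq_sqrt (by positivity)]
  have hnb : ‖b‖ ^ 2 = ∑ j, ‖b j‖ ^ 2 := by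
    rw [EuclideanSpace.norm_eq, Real.sq_sqrt (by positivity)]
  have hS : (0:ℝ) ≤ ∑ j, ‖a j‖ * ‖b j‖ :=
    Finset.sum_nonneg fun j _ => mul_nonneg (norm_nonneg _) (norm_nonneg _)
  have hab : (0:ℝ) ≤ ‖a‖ * ‖b‖ := mul_nonneg (norm_nonneg _) (norm_nonneg _)
  rw [← pow_le_pow_iff_left₀ hS hab two_ne_zero, mul_pow, hna, hnb]
  exact hcs

/-- For a bounded, strongly ℂ-linearly convex `C^{1,1}` domain, for boundary points
`w₁, w₂, z`: `|Δ(w₁,z) − Δ(w₂,z)| ≲ d(w₁,w₂)² + d(w₁,w₂)·d(w₁,z)`. -/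
theorem delta_difference_estimate (n : ℕ) (hn : 2 ≤ n)
    (ρ : EuclideanSpace ℂ (Fin n) → ℝ)
    (D : Set (EuclideanSpace ℂ (Fin n)))
    (hD : D = {z | ρ z < 0}) (hbdd : Bornology.IsBounded D)
    (hρ1 : ContDiff ℝ 1 ρ)
    (pc : EuclideanSpace ℂ (Fin n) → EuclideanSpace ℂ (Fin n))
    (hpc : ∀ w v, fderiv ℝ ρ w v = 2 * (∑ j, pc w j * v j).re)
    (Kpc : NNReal) (hpcLip : LipschitzWith Kpc pc)
    (hgrad : ∀ w, ρ w = 0 → fderiv ℝ ρ w ≠ 0)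
    (c₀ : ℝ) (hc₀ : 0 < c₀)
    (hconv : ∀ z, ρ z ≤ 0 → ∀ w, ρ w = 0 →
      c₀ * ‖w - z‖ ^ 2 ≤ ‖cplxPair pc w z‖) :
    ∃ C : ℝ, 0 < C ∧ ∀ w₁ w₂ z, ρ w₁ = 0 → ρ w₂ = 0 → ρ z = 0 →
      ‖cplxPair pc w₁ z - cplxPair pc w₂ z‖ ≤
        C * (lerayDist pc w₁ w₂ ^ 2 + lerayDist pc w₁ w₂ * lerayDist pc w₁ z) := by
  refine ⟨1 + 2 * (Kpc : ℝ) / c₀, by positivity, fun w₁ w₂ z hw₁ hw₂ hz => ?_⟩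
  set d₁ : ℝ := lerayDist pc w₁ w₂ with hd₁def
  set d₂ : ℝ := lerayDist pc w₁ z with hd₂def
  have hd₁0 : 0 ≤ d₁ := Real.sqrt_nonneg _
  have hd₂0 : 0 ≤ d₂ := Real.sqrt_nonneg _
  -- d² = |Δ|
  have hd₁sq : d₁ ^ 2 = ‖cplxPair pc w₁ w₂‖ := by
    rw [hd₁def, lerayDist, Real.sq_sqrt (norm_nonneg _)]
  have hd₂sq : d₂ ^ 2 = ‖cplxPair pc w₁ z‖ := by
    rw [hd₂def, lerayDist, Real.sq_sqrt (norm_nonneg _)]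
  -- norms controlled by quasi-distance
  have ha : c₀ * ‖w₁ - w₂‖ ^ 2 ≤ d₁ ^ 2 := by
    rw [hd₁sq]; exact hconv w₂ (le_of_eq hw₂) w₁ hw₁
  have hb : c₀ * ‖w₁ - z‖ ^ 2 ≤ d₂ ^ 2 := by
    rw [hd₂sq]; exact hconv z (le_of_eq hz) w₁ hw₁
  -- Lipschitz bound
  have hlip : ‖pc w₁ - pc w₂‖ ≤ (Kpc : ℝ) * ‖w₁ - w₂‖ := by
    have := hpcLip.dist_le_mul w₁ w₂
    rwa [dist_eq_norm, dist_eq_norm] at this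
  -- algebraic identities
  have hid : cplxPair pc w₁ z - cplxPair pc w₂ z + cplxPair pc w₂ w₁
      = ∑ j, (pc w₁ - pc w₂) j * (w₁ j - z j) := by
    rw [cplxPair, cplxPair, cplxPair, ← Finset.sum_sub_distrib, ← Finset.sum_add_distrib]
    refine Finset.sum_congr rfl fun j _ => ?_
    simp only [PiLp.sub_apply]; ring
  have hid2 : cplxPair pc w₂ w₁ + cplxPair pc w₁ w₂
      = ∑ j, (pc w₁ - pc w₂) j * (w₁ j - w₂ j) := by
    rw [cplxPair, cplxPair, ← Finset.sum_add_distrib]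
    refine Finset.sum_congr rfl fun j _ => ?_
    simp only [PiLp.sub_apply]; ring
  -- bound the two correction sums by Cauchy–Schwarz
  have hS1 : ‖∑ j, (pc w₁ - pc w₂) j * (w₁ j - z j)‖
      ≤ ‖pc w₁ - pc w₂‖ * ‖w₁ - z‖ := by
    have := sum_mul_abs_le_norm_mul_norm (pc w₁ - pc w₂) (w₁ - z)
    simpa [PiLp.sub_apply] using this
  have hS2 : ‖∑ j, (pc w₁ - pc w₂) j * (w₁ j - w₂ j)‖
      ≤ ‖pc w₁ - pc w₂‖ * ‖w₁ - w₂‖ := by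
    have := sum_mul_abs_le_norm_mul_norm (pc w₁ - pc w₂) (w₁ - w₂)
    simpa [PiLp.sub_apply] using this
  have hK0 : (0:ℝ) ≤ (Kpc : ℝ) := Kpc.coe_nonneg
  have hlip1 : ‖pc w₁ - pc w₂‖ * ‖w₁ - z‖ ≤ (Kpc : ℝ) * ‖w₁ - w₂‖ * ‖w₁ - z‖ := by gcongr
  have hlip2 : ‖pc w₁ - pc w₂‖ * ‖w₁ - w₂‖ ≤ (Kpc : ℝ) * ‖w₁ - w₂‖ * ‖w₁ - w₂‖ := by gcongr
  -- bound |Δ(w₂,w₁)|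
  have h21 : ‖cplxPair pc w₂ w₁‖
      ≤ d₁ ^ 2 + (Kpc : ℝ) * ‖w₁ - w₂‖ * ‖w₁ - w₂‖ := by
    have e : cplxPair pc w₂ w₁
        = (∑ j, (pc w₁ - pc w₂) j * (w₁ j - w₂ j)) - cplxPair pc w₁ w₂ := by
      linear_combination hid2
    rw [e, sub_eq_add_neg]
    refine (norm_add_le _ _).trans ?_
    rw [norm_neg, ← hd₁sq]
    linarith [hS2.trans hlip2]
  -- total bound
  have htot : ‖cplxPair pc w₁ z - cplxPair pc w₂ z‖
      ≤ d₁ ^ 2 + (Kpc : ℝ) * ‖w₁ - w₂‖ * ‖w₁ - w₂‖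
        + (Kpc : ℝ) * ‖w₁ - w₂‖ * ‖w₁ - z‖ := by
    have e : cplxPair pc w₁ z - cplxPair pc w₂ z
        = (∑ j, (pc w₁ - pc w₂) j * (w₁ j - z j)) - cplxPair pc w₂ w₁ := by
      linear_combination hid
    rw [e, sub_eq_add_neg]
    refine (norm_add_le _ _).trans ?_
    rw [norm_neg]
    linarith [hS1.trans hlip1]
  refine htot.trans ?_
  -- now pure real arithmetic
  have hnab : c₀ * (‖w₁ - w₂‖ * ‖w₁ - z‖) ≤ d₁ * d₂ := by
    have h1 : (c₀ * (‖w₁ - w₂‖ * ‖w₁ - z‖)) ^ 2 ≤ (d₁ * d₂) ^ 2 := by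
      have := mul_le_mul ha hb (by positivity) (le_trans (by positivity) ha)
      calc (c₀ * (‖w₁ - w₂‖ * ‖w₁ - z‖)) ^ 2
          = (c₀ * ‖w₁ - w₂‖ ^ 2) * (c₀ * ‖w₁ - z‖ ^ 2) := by ring
        _ ≤ d₁ ^ 2 * d₂ ^ 2 := this
        _ = (d₁ * d₂) ^ 2 := by ring
    have h2 : (0:ℝ) ≤ c₀ * (‖w₁ - w₂‖ * ‖w₁ - z‖) := by positivity
    have h3 : (0:ℝ) ≤ d₁ * d₂ := mul_nonneg hd₁0 hd₂0
    exact (pow_le_pow_iff_left₀ h2 h3 two_ne_zero).mp h1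
  have h4 : (Kpc : ℝ) * ‖w₁ - w₂‖ * ‖w₁ - w₂‖ ≤ (Kpc : ℝ) / c₀ * d₁ ^ 2 := by
    rw [div_mul_eq_mul_div, le_div_iff₀ hc₀]
    nlinarith [mul_le_mul_of_nonneg_left ha hK0]
  have h5 : (Kpc : ℝ) * ‖w₁ - w₂‖ * ‖w₁ - z‖ ≤ (Kpc : ℝ) / c₀ * (d₁ * d₂) := by
    rw [div_mul_eq_mul_div, le_div_iff₀ hc₀]
    nlinarith [mul_le_mul_of_nonneg_left hnab hK0]
  have hKc : (0:ℝ) ≤ (Kpc : ℝ) / c₀ := by positivity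
  have e : (1 + 2 * (Kpc : ℝ) / c₀) * (d₁ ^ 2 + d₁ * d₂)
      = d₁ ^ 2 + d₁ * d₂ + ((Kpc : ℝ) / c₀ * d₁ ^ 2 + (Kpc : ℝ) / c₀ * (d₁ * d₂))
        + ((Kpc : ℝ) / c₀ * d₁ ^ 2 + (Kpc : ℝ) / c₀ * (d₁ * d₂)) := by ring
  rw [e]
  have p1 : (0:ℝ) ≤ (Kpc : ℝ) / c₀ * d₁ ^ 2 := mul_nonneg hKc (sq_nonneg d₁)
  have p2 : (0:ℝ) ≤ (Kpc : ℝ) / c₀ * (d₁ * d₂) := mul_nonneg hKc (mul_nonneg hd₁0 hd₂0)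
  have p3 : (0:ℝ) ≤ d₁ * d₂ := mul_nonneg hd₁0 hd₂0
  linarith
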